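/- Every valuation on a field K whose value group is order-isomorphic to ℤ^n with the lexicographic ordering decomposes uniquely as a composite v = v_1 ∘ v_2 ∘ ⋯ ∘ v_n where each v_i is a discrete rank 1 valuation on the residue field of v_1 ∘ ⋯ ∘ v_{i−1} (with the convention that the residue field of the empty composite is K). -/

import Mathlib

open Function
namespace Stmt5
set_option linter.unusedSectionVars false

section LexLemmas

theorem lex_lt_iff {m : ℕ} [WellFoundedLT (Fin m)] {a b : Lex (Fin m → ℤ)} :
    a < b ↔ ∃ i, (∀ j, j < i → ofLex a j = ofLex b j) ∧ ofLex a i < ofLex b i := Iff.rfl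

variable {m : ℕ} [WellFoundedLT (Fin (m + 1))] [WellFoundedLT (Fin m)]

def tl (a : Lex (Fin (m + 1) → ℤ)) : Lex (Fin m → ℤ) := toLex fun i => ofLex a i.succ

theorem head_mono {a b : Lex (Fin (m + 1) → ℤ)} (h : a ≤ b) : ofLex a 0 ≤ ofLex b 0 := by
  rcases eq_or_lt_of_le h with rfl | h
  · exact le_rfl
  rcases lex_lt_iff.1 h with ⟨i, hj, hi⟩
  rcases eq_or_ne i 0 with rfl | h0
  · exact hi.le
  · exact (hj 0 (Fin.pos_of_ne_zero h0)).le

theorem head_lt {a b : Lex (Fin (m + 1) → ℤ)} (h : ofLex a 0 < ofLex b 0) : a < b :=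
  lex_lt_iff.2 ⟨0, fun j hj => absurd hj (Fin.not_lt_zero j), h⟩

theorem head_eq_lt_iff {a b : Lex (Fin (m + 1) → ℤ)} (h : ofLex a 0 = ofLex b 0) :
    a < b ↔ tl a < tl b := by
  constructor
  · rintro ⟨i, hj, hi⟩
    induction i using Fin.cases with
    | zero => exact absurd hi (by rw [show a 0 = b 0 from h]; exact lt_irrefl _)
    | succ j =>
      exact lex_lt_iff.2 ⟨j, fun j' hj' => hj j'.succ (Fin.succ_lt_succ_iff.2 hj'), hi⟩
  · rintro ⟨j, hj', hjlt⟩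
    refine lex_lt_iff.2 ⟨j.succ, fun i hi => ?_, hjlt⟩
    induction i using Fin.cases with
    | zero => exact h
    | succ i' => exact hj' i' (Fin.succ_lt_succ_iff.1 hi)

theorem head_eq_eq_iff {a b : Lex (Fin (m + 1) → ℤ)} (h : ofLex a 0 = ofLex b 0) :
    a = b ↔ tl a = tl b := by
  constructor
  · rintro rfl; rfl
  · intro ht
    have : ∀ i, ofLex a i = ofLex b i := by
      intro i
      induction i using Fin.cases with
      | zero => exact h
      | succ i' => exact congrFun (congrArg ofLex ht) i'
    exact funext this

theorem head_eq_le_iff {a b : Lex (Fin (m + 1) → ℤ)} (h : ofLex a 0 = ofLex b 0) :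
    a ≤ b ↔ tl a ≤ tl b := by
  rw [le_iff_lt_or_eq, le_iff_lt_or_eq, head_eq_eq_iff h]; exact or_congr_left (head_eq_lt_iff h)

end LexLemmas

section MultLayer

variable (m : ℕ) [WellFoundedLT (Fin (m + 1))] [WellFoundedLT (Fin m)]

/-- head as a monoid hom on the multiplicative lex group -/
def hdM : Multiplicative (Lex (Fin (m + 1) → ℤ)) →* Multiplicative ℤ :=
  AddMonoidHom.toMultiplicative
    { toFun := fun g => ofLex g 0
      map_zero' := rfl
      map_add' := fun _ _ => rfl }

/-- tail as a monoid hom -/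
def tlM : Multiplicative (Lex (Fin (m + 1) → ℤ)) →* Multiplicative (Lex (Fin m → ℤ)) :=
  AddMonoidHom.toMultiplicative
    { toFun := tl
      map_zero' := rfl
      map_add' := fun _ _ => rfl }

noncomputable def hdZ : WithZero (Multiplicative (Lex (Fin (m + 1) → ℤ))) →*₀ WithZero (Multiplicative ℤ) :=
  WithZero.map' (hdM m)

noncomputable def tlZ : WithZero (Multiplicative (Lex (Fin (m + 1) → ℤ))) →*₀
    WithZero (Multiplicative (Lex (Fin m → ℤ))) :=
  WithZero.map' (tlM m)

variable {m}

theorem hdM_le_hdM {a b : Multiplicative (Lex (Fin (m + 1) → ℤ))} (h : a ≤ b) :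
    hdM m a ≤ hdM m b := by
  have h' : (Multiplicative.toAdd a : Lex (Fin (m + 1) → ℤ)) ≤ Multiplicative.toAdd b := h
  exact (head_mono h' :
    ofLex (Multiplicative.toAdd a) 0 ≤ ofLex (Multiplicative.toAdd b) 0)

theorem hdM_lt {a b : Multiplicative (Lex (Fin (m + 1) → ℤ))} (h : hdM m a < hdM m b) :
    a < b := by
  have h' : ofLex (Multiplicative.toAdd a) 0 < ofLex (Multiplicative.toAdd b) 0 := h
  exact (head_lt h' : (Multiplicative.toAdd a : Lex (Fin (m + 1) → ℤ)) < Multiplicative.toAdd b)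

theorem hdZ_mono : Monotone (hdZ m) := by
  intro a b hab
  rcases eq_or_ne a 0 with rfl | ha
  · rw [map_zero]; exact zero_le'
  rcases eq_or_ne b 0 with rfl | hb
  · exact absurd (le_zero_iff.1 hab) ha
  obtain ⟨x, rfl⟩ := WithZero.ne_zero_iff_exists.1 ha
  obtain ⟨y, rfl⟩ := WithZero.ne_zero_iff_exists.1 hb
  rw [hdZ, WithZero.map'_coe, WithZero.map'_coe, WithZero.coe_le_coe]
  exact hdM_le_hdM (WithZero.coe_le_coe.1 hab)

theorem hdZ_lt {a b : WithZero (Multiplicative (Lex (Fin (m + 1) → ℤ)))}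
    (h : hdZ m a < hdZ m b) : a < b := by
  rcases eq_or_ne b 0 with rfl | hb
  · rw [map_zero] at h; exact absurd h (not_lt_zero')
  rcases eq_or_ne a 0 with rfl | ha
  · exact zero_lt_iff.2 hb
  obtain ⟨x, rfl⟩ := WithZero.ne_zero_iff_exists.1 ha
  obtain ⟨y, rfl⟩ := WithZero.ne_zero_iff_exists.1 hb
  rw [hdZ, WithZero.map'_coe, WithZero.map'_coe, WithZero.coe_lt_coe] at h
  exact WithZero.coe_lt_coe.2 (hdM_lt h)

theorem tlZ_le {a b : WithZero (Multiplicative (Lex (Fin (m + 1) → ℤ)))}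
    (hab : a ≤ b) (hh : hdZ m b ≤ hdZ m a) : tlZ m a ≤ tlZ m b := by
  rcases eq_or_ne a 0 with rfl | ha
  · rw [map_zero]; exact zero_le'
  rcases eq_or_ne b 0 with rfl | hb
  · exact absurd (le_zero_iff.1 hab) ha
  obtain ⟨x, rfl⟩ := WithZero.ne_zero_iff_exists.1 ha
  obtain ⟨y, rfl⟩ := WithZero.ne_zero_iff_exists.1 hb
  rw [hdZ, WithZero.map'_coe, WithZero.map'_coe, WithZero.coe_le_coe] at hh
  rw [tlZ, WithZero.map'_coe, WithZero.map'_coe, WithZero.coe_le_coe]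
  have hle := WithZero.coe_le_coe.1 hab
  have hle' : (Multiplicative.toAdd x : Lex (Fin (m + 1) → ℤ)) ≤ Multiplicative.toAdd y := hle
  have heq : ofLex (Multiplicative.toAdd x) 0 = ofLex (Multiplicative.toAdd y) 0 :=
    le_antisymm (head_mono hle') hh
  exact (head_eq_le_iff heq).1 hle'

theorem le_of_tlZ_le {a b : WithZero (Multiplicative (Lex (Fin (m + 1) → ℤ)))}
    (hb : b ≠ 0) (hh : hdZ m a = hdZ m b) (h : tlZ m a ≤ tlZ m b) : a ≤ b := by
  rcases eq_or_ne a 0 with rfl | ha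
  · exact zero_le'
  obtain ⟨x, rfl⟩ := WithZero.ne_zero_iff_exists.1 ha
  obtain ⟨y, rfl⟩ := WithZero.ne_zero_iff_exists.1 hb
  rw [hdZ, WithZero.map'_coe, WithZero.map'_coe, WithZero.coe_inj] at hh
  rw [tlZ, WithZero.map'_coe, WithZero.map'_coe, WithZero.coe_le_coe] at h
  have hh2 : ofLex (Multiplicative.toAdd x) 0 = ofLex (Multiplicative.toAdd y) 0 :=
    congrArg Multiplicative.toAdd hh
  have h' : tl (Multiplicative.toAdd x) ≤ tl (Multiplicative.toAdd y) := h
  exact WithZero.coe_le_coe.2 ((head_eq_le_iff hh2).2 h')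

theorem toAdd_hdM {a : Multiplicative (Lex (Fin (m + 1) → ℤ))} :
    Multiplicative.toAdd (hdM m a) = ofLex (Multiplicative.toAdd a) 0 := rfl

theorem toAdd_tlM {a : Multiplicative (Lex (Fin (m + 1) → ℤ))} :
    Multiplicative.toAdd (tlM m a) = tl (Multiplicative.toAdd a) := rfl

/-- cons for lex vectors -/
def consL (m : ℕ) (a : ℤ) (s : Fin m → ℤ) : Lex (Fin (m + 1) → ℤ) := toLex (Fin.cons a s)

theorem consL_zero (a : ℤ) (s : Fin m → ℤ) : ofLex (consL m a s) 0 = a := by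
  simp [consL]

theorem consL_succ (a : ℤ) (s : Fin m → ℤ) (i : Fin m) : ofLex (consL m a s) i.succ = s i := by
  simp [consL]

end MultLayer

section Main

variable {K : Type*} [Field K] {n : ℕ} [WellFoundedLT (Fin (n + 1))] [WellFoundedLT (Fin n)]
variable (v : Valuation K (WithZero (Multiplicative (Lex (Fin (n + 1) → ℤ)))))

/-- the induced rank-one valuation -/
noncomputable def vone : Valuation K (WithZero (Multiplicative ℤ)) :=
  v.map (hdZ n) hdZ_mono

theorem vone_apply (x : K) : vone v x = hdZ n (v x) := rfl

theorem vone_surj (hv : Surjective v) : Surjective (vone v) := by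
  intro c
  rcases eq_or_ne c 0 with rfl | hc
  · exact ⟨0, by rw [map_zero]⟩
  obtain ⟨y, rfl⟩ := WithZero.ne_zero_iff_exists.1 hc
  obtain ⟨x, hx⟩ := hv (WithZero.coe (Multiplicative.ofAdd
    (consL n (Multiplicative.toAdd y) 0)))
  refine ⟨x, ?_⟩
  rw [vone_apply, hx, hdZ, WithZero.map'_coe, WithZero.coe_inj]
  apply Multiplicative.toAdd.injective
  rw [toAdd_hdM, toAdd_ofAdd, consL_zero]

theorem mem_max_iff (x : (vone v).valuationSubring) :
    x ∈ IsLocalRing.maximalIdeal (vone v).valuationSubring ↔ vone v (x : K) < 1 := by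
  rw [ValuationSubring.valuation_lt_one_iff]
  exact ((Valuation.isEquiv_valuation_valuationSubring (vone v)).lt_one_iff_lt_one).symm

/-- raw function on the valuation subring inducing `w` -/
noncomputable def wsub (x : (vone v).valuationSubring) :
    WithZero (Multiplicative (Lex (Fin n → ℤ))) :=
  if 1 ≤ vone v (x : K) then tlZ n (v (x : K)) else 0

theorem wsub_aux {x y : (vone v).valuationSubring}
    (hxy : x - y ∈ IsLocalRing.maximalIdeal (vone v).valuationSubring)
    (hx : 1 ≤ vone v (x : K)) : v (y : K) = v (x : K) := by
  have hx1 : vone v (x : K) = 1 := le_antisymm x.2 hx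
  have hd : vone v ((x : K) - (y : K)) < 1 := by
    have := (mem_max_iff v _).1 hxy
    rwa [AddSubgroupClass.coe_sub] at this
  have hlt : v ((x : K) - (y : K)) < v (x : K) := by
    apply hdZ_lt
    rw [← vone_apply, ← vone_apply, hx1]
    exact hd
  rw [← sub_sub_cancel (x : K) (y : K)]
  exact Valuation.map_sub_eq_of_lt_left v hlt

theorem wsub_congr {x y : (vone v).valuationSubring}
    (hxy : x - y ∈ IsLocalRing.maximalIdeal (vone v).valuationSubring) :
    wsub v x = wsub v y := by
  by_cases hx : 1 ≤ vone v (x : K)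
  · have hvy := wsub_aux v hxy hx
    have hy : 1 ≤ vone v (y : K) := by
      rw [vone_apply, hvy, ← vone_apply]; exact hx
    rw [wsub, wsub, if_pos hx, if_pos hy, hvy]
  · have hy : ¬ 1 ≤ vone v (y : K) := by
      intro h1
      have hyx : y - x ∈ IsLocalRing.maximalIdeal (vone v).valuationSubring := by
        have := neg_mem hxy; rwa [neg_sub] at this
      have := wsub_aux v hyx h1
      exact hx (by rw [vone_apply, this, ← vone_apply]; exact h1)
    rw [wsub, wsub, if_neg hx, if_neg hy]

theorem wsub_mul (x y : (vone v).valuationSubring) :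
    wsub v (x * y) = wsub v x * wsub v y := by
  have hco : ((x * y : (vone v).valuationSubring) : K) = (x : K) * (y : K) := rfl
  by_cases hx : 1 ≤ vone v (x : K)
  · by_cases hy : 1 ≤ vone v (y : K)
    · have hx1 : vone v (x : K) = 1 := le_antisymm x.2 hx
      have hy1 : vone v (y : K) = 1 := le_antisymm y.2 hy
      have hxy : 1 ≤ vone v ((x : K) * (y : K)) := by
        rw [map_mul, hx1, hy1, one_mul]
      rw [wsub, wsub, wsub, hco, if_pos hxy, if_pos hx, if_pos hy, map_mul, map_mul]
    · have hxy : ¬ 1 ≤ vone v ((x : K) * (y : K)) := by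
        intro h
        apply hy
        have h1 : vone v ((x : K) * (y : K)) ≤ vone v (y : K) := by
          rw [map_mul]
          calc vone v (x : K) * vone v (y : K) ≤ 1 * vone v (y : K) :=
                mul_le_mul_left x.2 _
            _ = vone v (y : K) := one_mul _
        exact le_trans h h1
      rw [wsub, wsub, wsub, hco, if_neg hxy, if_neg hy, mul_zero]
  · have hxy : ¬ 1 ≤ vone v ((x : K) * (y : K)) := by
      intro h
      apply hx
      have h1 : vone v ((x : K) * (y : K)) ≤ vone v (x : K) := by
        rw [map_mul]
        calc vone v (x : K) * vone v (y : K) ≤ vone v (x : K) * 1 :=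
              mul_le_mul_right y.2 _
          _ = vone v (x : K) := mul_one _
      exact le_trans h h1
    rw [wsub, wsub, wsub, hco, if_neg hxy, if_neg hx, zero_mul]

theorem wsub_add (x y : (vone v).valuationSubring) :
    wsub v (x + y) ≤ max (wsub v x) (wsub v y) := by
  have hco : ((x + y : (vone v).valuationSubring) : K) = (x : K) + (y : K) := rfl
  by_cases hs : 1 ≤ vone v ((x : K) + (y : K))
  · rcases le_max_iff.1 (v.map_add (x : K) (y : K)) with h | h
    · have hx1 : 1 ≤ vone v (x : K) := le_trans hs (hdZ_mono h)
      refine le_max_of_le_left ?_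
      rw [wsub, wsub, hco, if_pos hs, if_pos hx1]
      exact tlZ_le h (le_trans x.2 hs)
    · have hy1 : 1 ≤ vone v (y : K) := le_trans hs (hdZ_mono h)
      refine le_max_of_le_right ?_
      rw [wsub, wsub, hco, if_pos hs, if_pos hy1]
      exact tlZ_le h (le_trans y.2 hs)
  · rw [wsub, hco, if_neg hs]
    exact le_max_of_le_left zero_le'

noncomputable def wfun (ξ : IsLocalRing.ResidueField (vone v).valuationSubring) :
    WithZero (Multiplicative (Lex (Fin n → ℤ))) :=
  wsub v (surjInv IsLocalRing.residue_surjective ξ)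

theorem wfun_residue (x : (vone v).valuationSubring) :
    wfun v (IsLocalRing.residue _ x) = wsub v x := by
  apply wsub_congr
  have h : IsLocalRing.residue _
      (surjInv IsLocalRing.residue_surjective (IsLocalRing.residue _ x)) =
      IsLocalRing.residue _ x :=
    surjInv_eq _ _
  exact Ideal.Quotient.eq.1 h

/-- the induced valuation on the residue field -/
noncomputable def wV : Valuation (IsLocalRing.ResidueField (vone v).valuationSubring)
    (WithZero (Multiplicative (Lex (Fin n → ℤ)))) where
  toFun := wfun v
  map_zero' := by
    show wfun v 0 = 0
    have h0 : (0 : IsLocalRing.ResidueField (vone v).valuationSubring) =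
        IsLocalRing.residue _ 0 := (map_zero _).symm
    rw [h0, wfun_residue, wsub, if_neg]
    rw [ZeroMemClass.coe_zero, map_zero]
    simp
  map_one' := by
    show wfun v 1 = 1
    have h1 : (1 : IsLocalRing.ResidueField (vone v).valuationSubring) =
        IsLocalRing.residue _ 1 := (map_one _).symm
    rw [h1, wfun_residue, wsub, if_pos] <;>
      rw [OneMemClass.coe_one, map_one]
    rw [map_one]
  map_mul' := fun ξ η => by
    obtain ⟨x, rfl⟩ := IsLocalRing.residue_surjective ξ
    obtain ⟨y, rfl⟩ := IsLocalRing.residue_surjective η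
    show wfun v _ = wfun v _ * wfun v _
    rw [← map_mul, wfun_residue, wfun_residue, wfun_residue]
    exact wsub_mul v x y
  map_add_le_max' := fun ξ η => by
    obtain ⟨x, rfl⟩ := IsLocalRing.residue_surjective ξ
    obtain ⟨y, rfl⟩ := IsLocalRing.residue_surjective η
    show wfun v _ ≤ max (wfun v _) (wfun v _)
    rw [← map_add, wfun_residue, wfun_residue, wfun_residue]
    exact wsub_add v x y

theorem wV_apply (x : (vone v).valuationSubring) :
    wV v (IsLocalRing.residue _ x) = wsub v x := wfun_residue v x

theorem wV_surj (hv : Surjective v) : Surjective (wV v) := by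
  intro c
  rcases eq_or_ne c 0 with rfl | hc
  · exact ⟨0, map_zero _⟩
  obtain ⟨t, rfl⟩ := WithZero.ne_zero_iff_exists.1 hc
  obtain ⟨x, hx⟩ := hv (WithZero.coe (Multiplicative.ofAdd
    (consL n 0 (ofLex (Multiplicative.toAdd t)))))
  have hx1 : vone v x = 1 := by
    rw [vone_apply, hx, hdZ, WithZero.map'_coe]
    have h : hdM n (Multiplicative.ofAdd (consL n 0 (ofLex (Multiplicative.toAdd t)))) = 1 := by
      apply Multiplicative.toAdd.injective
      rw [toAdd_hdM, toAdd_ofAdd, consL_zero, toAdd_one]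
    rw [h, WithZero.coe_one]
  refine ⟨IsLocalRing.residue _ ⟨x, le_of_eq hx1⟩, ?_⟩
  rw [wV_apply, wsub, if_pos (le_of_eq hx1.symm)]
  show tlZ n (v x) = _
  rw [hx, tlZ, WithZero.map'_coe, WithZero.coe_inj]
  apply Multiplicative.toAdd.injective
  rw [toAdd_tlM, toAdd_ofAdd]
  have h2 : (fun i => ofLex (consL n 0 (ofLex (Multiplicative.toAdd t))) i.succ) =
      ofLex (Multiplicative.toAdd t) := by
    funext i
    rw [consL_succ]
  rw [tl, h2]
  simp

theorem cond_iff (x : K) : x ∈ v.valuationSubring ↔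
    ∃ hx : x ∈ (vone v).valuationSubring,
      IsLocalRing.residue _ (⟨x, hx⟩ : (vone v).valuationSubring) ∈
        (wV v).valuationSubring := by
  constructor
  · intro hxv
    have hxv' : v x ≤ 1 := hxv
    have hx : vone v x ≤ 1 := by
      have := hdZ_mono hxv'
      rwa [map_one, ← vone_apply] at this
    refine ⟨hx, ?_⟩
    rw [Valuation.mem_valuationSubring_iff, wV_apply, wsub]
    by_cases h1 : 1 ≤ vone v x
    · rw [if_pos h1]
      have h2 : tlZ n (v x) ≤ tlZ n 1 := by
        apply tlZ_le hxv'
        rw [map_one]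
        exact h1
      rwa [map_one] at h2
    · rw [if_neg h1]
      exact zero_le'
  · rintro ⟨hx, hw⟩
    rw [Valuation.mem_valuationSubring_iff, wV_apply, wsub] at hw
    show v x ≤ 1
    by_cases h1 : 1 ≤ vone v x
    · rw [if_pos h1] at hw
      apply le_of_tlZ_le one_ne_zero
      · rw [map_one, ← vone_apply]
        exact le_antisymm hx h1
      · rwa [map_one]
    · apply le_of_lt
      apply hdZ_lt
      rw [map_one, ← vone_apply]
      exact lt_of_not_ge h1

theorem O1_unique (hv : Surjective v) (v1 : Valuation K (WithZero (Multiplicative ℤ)))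
    (hs1 : Surjective v1) (hOsub : ∀ x : K, v x ≤ 1 → v1 x ≤ 1) :
    v1.valuationSubring = (vone v).valuationSubring := by
  have L1 : ∀ x y : K, y ≠ 0 → v x ≤ v y → v1 x ≤ v1 y := by
    intro x y hy hle
    have hvy : v y ≠ 0 := v.ne_zero_iff.2 hy
    have h1 : v (x / y) ≤ 1 := by
      rw [map_div₀, div_eq_mul_inv]
      calc v x * (v y)⁻¹ ≤ v y * (v y)⁻¹ := mul_le_mul_left hle _
        _ = 1 := mul_inv_cancel₀ hvy
    have h2 := hOsub _ h1
    calc v1 x = v1 (x / y * y) := by rw [div_mul_cancel₀ _ hy]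
      _ = v1 (x / y) * v1 y := map_mul _ _ _
      _ ≤ 1 * v1 y := mul_le_mul_left h2 _
      _ = v1 y := one_mul _
  obtain ⟨u, hu⟩ := hv (WithZero.coe (Multiplicative.ofAdd (consL n 1 0)))
  have hu0 : u ≠ 0 := by
    intro h
    rw [h, map_zero] at hu
    exact WithZero.zero_ne_coe hu
  have hdu : hdZ n (v u) = ((Multiplicative.ofAdd (1 : ℤ) : Multiplicative ℤ) : WithZero _) := by
    rw [hu, hdZ, WithZero.map'_coe, WithZero.coe_inj]
    apply Multiplicative.toAdd.injective
    rw [toAdd_hdM, toAdd_ofAdd, toAdd_ofAdd, consL_zero]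
  have L3 : ¬ v1 u ≤ 1 := by
    intro hle
    have hall : ∀ z : K, v1 z ≤ 1 := by
      intro z
      rcases eq_or_ne z 0 with rfl | hz
      · rw [map_zero]; exact zero_le'
      obtain ⟨g, hg⟩ := WithZero.ne_zero_iff_exists.1 (v.ne_zero_iff.2 hz)
      obtain ⟨k, hk⟩ : ∃ k : ℕ, ofLex (Multiplicative.toAdd g) 0 < (k : ℤ) :=
        ⟨(ofLex (Multiplicative.toAdd g) 0).toNat + 1, by push_cast; omega⟩
      have hc : ofLex (Multiplicative.toAdd
          ((Multiplicative.ofAdd (consL n 1 0)) ^ k)) 0 = (k : ℤ) := by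
        rw [← toAdd_hdM, map_pow, toAdd_pow, toAdd_hdM,
          toAdd_ofAdd, consL_zero, nsmul_eq_mul, mul_one]
      have hzu : v z ≤ v (u ^ k) := by
        rw [map_pow, hu, ← WithZero.coe_pow, ← hg, WithZero.coe_le_coe]
        apply le_of_lt
        have hlt : ofLex (Multiplicative.toAdd g) 0 <
            ofLex (Multiplicative.toAdd ((Multiplicative.ofAdd (consL n 1 0)) ^ k)) 0 := by
          rw [hc]
          exact hk
        exact head_lt hlt
      calc v1 z ≤ v1 (u ^ k) := L1 _ _ (pow_ne_zero _ hu0) hzu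
        _ = (v1 u) ^ k := map_pow _ _ _
        _ ≤ 1 := pow_le_one' hle k
    obtain ⟨z, hz⟩ := hs1 ((Multiplicative.ofAdd (1 : ℤ) : Multiplicative ℤ) : WithZero _)
    have h := hall z
    rw [hz, ← WithZero.coe_one, WithZero.coe_le_coe] at h
    have h' : (1 : ℤ) ≤ (0 : ℤ) := h
    omega
  have L2 : ∀ x : K, x ≠ 0 → hdZ n (v x) = 1 → v1 x = 1 := by
    have aux : ∀ x : K, x ≠ 0 → hdZ n (v x) = 1 → v1 x ≤ 1 := by
      intro x hx hhd
      by_contra hlt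
      push_neg at hlt
      obtain ⟨b, hb⟩ := WithZero.ne_zero_iff_exists.1 (v1.ne_zero_iff.2 hx)
      obtain ⟨a, ha⟩ := WithZero.ne_zero_iff_exists.1 (v1.ne_zero_iff.2 hu0)
      set k := (Multiplicative.toAdd a).toNat + 1 with hk
      have hvk : v (x ^ k) ≤ v u := by
        apply le_of_lt
        apply hdZ_lt
        rw [map_pow, map_pow, hhd, one_pow, hdu, ← WithZero.coe_one, WithZero.coe_lt_coe]
        exact ((by omega : (0 : ℤ) < 1) : (1 : Multiplicative ℤ) < Multiplicative.ofAdd 1)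
      have h2 := L1 _ _ hu0 hvk
      rw [map_pow, ← hb, ← ha, ← WithZero.coe_pow, WithZero.coe_le_coe] at h2
      have hb1 : (1 : ℤ) ≤ Multiplicative.toAdd b := by
        have h3 : (1 : WithZero (Multiplicative ℤ)) < (b : WithZero (Multiplicative ℤ)) :=
          hb ▸ hlt
        rw [← WithZero.coe_one, WithZero.coe_lt_coe] at h3
        have h4 : (0 : ℤ) < Multiplicative.toAdd b := h3
        omega
      have hpk : Multiplicative.toAdd (b ^ k) = (k : ℤ) * Multiplicative.toAdd b := by
        rw [toAdd_pow, nsmul_eq_mul]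
      have h2' : (k : ℤ) * Multiplicative.toAdd b ≤ Multiplicative.toAdd a := by
        rw [← hpk]
        exact h2
      have h5 : (k : ℤ) * 1 ≤ (k : ℤ) * Multiplicative.toAdd b :=
        mul_le_mul_of_nonneg_left hb1 (by positivity)
      rw [mul_one] at h5
      have h6 : Multiplicative.toAdd a < (k : ℤ) := by
        rw [hk]
        push_cast
        omega
      omega
    intro x hx hhd
    refine le_antisymm (aux x hx hhd) ?_
    have hinv := aux x⁻¹ (inv_ne_zero hx) (by rw [map_inv₀, map_inv₀, hhd, inv_one])
    have hxx : v1 x * v1 x⁻¹ = 1 := by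
      rw [← map_mul, mul_inv_cancel₀ hx, map_one]
    calc (1 : WithZero (Multiplicative ℤ)) = v1 x * v1 x⁻¹ := hxx.symm
      _ ≤ v1 x * 1 := mul_le_mul_right hinv _
      _ = v1 x := mul_one _
  ext x
  show v1 x ≤ 1 ↔ vone v x ≤ 1
  rcases eq_or_ne x 0 with rfl | hx
  · rw [map_zero, map_zero]
  obtain ⟨g, hg⟩ := WithZero.ne_zero_iff_exists.1 (v.ne_zero_iff.2 hx)
  set q : ℤ := ofLex (Multiplicative.toAdd g) 0 with hqdef
  have hvone : vone v x = ((Multiplicative.ofAdd q : Multiplicative ℤ) : WithZero _) := by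
    rw [vone_apply, ← hg, hdZ, WithZero.map'_coe, WithZero.coe_inj]
    apply Multiplicative.toAdd.injective
    rw [toAdd_hdM, toAdd_ofAdd]
  have hone_iff : vone v x ≤ 1 ↔ q ≤ 0 := by
    rw [hvone, ← WithZero.coe_one, WithZero.coe_le_coe]
    exact Iff.rfl
  rcases lt_trichotomy q 0 with hq0 | hq0 | hq0
  · have hxv : v x ≤ 1 := by
      apply le_of_lt
      apply hdZ_lt
      rw [map_one, ← vone_apply, hvone, ← WithZero.coe_one, WithZero.coe_lt_coe]
      exact (hq0 : q < (0 : ℤ))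
    exact iff_of_true (hOsub x hxv) (hone_iff.2 hq0.le)
  · have hhd : hdZ n (v x) = 1 := by
      rw [← vone_apply, hvone, hq0]
      rfl
    exact iff_of_true (le_of_eq (L2 x hx hhd)) (hone_iff.2 hq0.le)
  · refine iff_of_false ?_ (by rw [hone_iff]; omega)
    set k := q.toNat with hkq
    have hk0 : k ≠ 0 := by omega
    have huk : u ^ k ≠ 0 := pow_ne_zero _ hu0
    have hy0 : x / u ^ k ≠ 0 := div_ne_zero hx huk
    have hyhd : hdZ n (v (x / u ^ k)) = 1 := by
      rw [map_div₀, map_pow, map_div₀, map_pow, hdu, ← vone_apply, hvone,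
        ← WithZero.coe_pow, ← WithZero.coe_div, ← WithZero.coe_one, WithZero.coe_inj]
      apply Multiplicative.toAdd.injective
      rw [toAdd_div, toAdd_pow, toAdd_ofAdd,
        toAdd_ofAdd, toAdd_one, nsmul_eq_mul]
      omega
    have hy1 := L2 _ hy0 hyhd
    have hvx : v1 x = (v1 u) ^ k := by
      have hxs : x = x / u ^ k * u ^ k := (div_mul_cancel₀ x huk).symm
      rw [hxs, map_mul, hy1, one_mul, map_pow]
    rw [hvx]
    intro hle
    have hgt : 1 < v1 u := lt_of_not_ge L3
    obtain ⟨a, ha⟩ := WithZero.ne_zero_iff_exists.1 (v1.ne_zero_iff.2 hu0)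
    rw [← ha, ← WithZero.coe_pow, ← WithZero.coe_one, WithZero.coe_le_coe] at hle
    rw [← ha, ← WithZero.coe_one, WithZero.coe_lt_coe] at hgt
    have h1 : (0 : ℤ) < Multiplicative.toAdd a := hgt
    have h2 : Multiplicative.toAdd (a ^ k) ≤ 0 := hle
    rw [toAdd_pow, nsmul_eq_mul] at h2
    have h3 : (1 : ℤ) ≤ (k : ℤ) := by omega
    nlinarith

end Main

end Stmt5

/-- Lemma 3.9(ii).  Every discrete valuation of rank `n+1` on a field `K`
(value group `ℤ^{n+1}` with the lexicographic ordering) decomposes uniquely as a composite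
`v = v₁ ∘ w`, where `v₁` is a discrete rank `1` valuation on `K` and `w` is a discrete rank
`n` valuation on the residue field `Kv₁`; iterating this unique decomposition yields the
unique decomposition `v = v₁ ∘ v₂ ∘ ⋯ ∘ v_{n+1}` into discrete rank `1` valuations on the
successive residue fields.  (Uniqueness is at the level of the corresponding valuation
subrings, which is what determines the `v_i` up to equivalence.) -/
theorem statement5
    (K : Type*) [Field K] (n : ℕ) [WellFoundedLT (Fin (n + 1))] [WellFoundedLT (Fin n)]
    (v : Valuation K (WithZero (Multiplicative (Lex (Fin (n + 1) → ℤ)))))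
    (hv : Surjective v) :
    ∃! P : Σ O₁ : ValuationSubring K, ValuationSubring (IsLocalRing.ResidueField O₁),
      (∃ v₁ : Valuation K (WithZero (Multiplicative ℤ)),
          Surjective v₁ ∧ v₁.valuationSubring = P.1) ∧
      (∃ w : Valuation (IsLocalRing.ResidueField P.1)
            (WithZero (Multiplicative (Lex (Fin n → ℤ)))),
          Surjective w ∧ w.valuationSubring = P.2) ∧
      (∀ x : K, x ∈ v.valuationSubring ↔
        ∃ hx : x ∈ P.1, IsLocalRing.residue P.1 ⟨x, hx⟩ ∈ P.2) := by
  refine ⟨⟨(Stmt5.vone v).valuationSubring, (Stmt5.wV v).valuationSubring⟩,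
    ⟨⟨Stmt5.vone v, Stmt5.vone_surj v hv, rfl⟩,
     ⟨Stmt5.wV v, Stmt5.wV_surj v hv, rfl⟩,
     fun x => Stmt5.cond_iff v x⟩, ?_⟩
  rintro ⟨A, B⟩ ⟨⟨v1, hs1, hr1⟩, ⟨w', hs2, hr2⟩, hcond⟩
  dsimp only at hr1 hr2 hcond
  have hOsub : ∀ x : K, v x ≤ 1 → v1 x ≤ 1 := by
    intro x hxle
    obtain ⟨h1, -⟩ := (hcond x).1 hxle
    rw [← hr1] at h1
    exact h1
  have hA : A = (Stmt5.vone v).valuationSubring := by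
    rw [← hr1]
    exact Stmt5.O1_unique v hv v1 hs1 hOsub
  subst hA
  have hB : B = (Stmt5.wV v).valuationSubring := by
    ext ξ
    obtain ⟨x, rfl⟩ := IsLocalRing.residue_surjective ξ
    have h1 : ((x : K) ∈ v.valuationSubring) ↔ (IsLocalRing.residue _ x ∈ B) := by
      constructor
      · intro hm
        obtain ⟨hx', h⟩ := (hcond (x : K)).1 hm
        rwa [Subtype.coe_eta] at h
      · intro h
        exact (hcond (x : K)).2 ⟨x.2, by rwa [Subtype.coe_eta]⟩
    have h2 : ((x : K) ∈ v.valuationSubring) ↔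
        (IsLocalRing.residue _ x ∈ (Stmt5.wV v).valuationSubring) := by
      constructor
      · intro hm
        obtain ⟨hx', h⟩ := (Stmt5.cond_iff v (x : K)).1 hm
        rwa [Subtype.coe_eta] at h
      · intro h
        exact (Stmt5.cond_iff v (x : K)).2 ⟨x.2, by rwa [Subtype.coe_eta]⟩
    rw [← h1, h2]
  subst hB
  rfl
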